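/- Let $s, y \in \mathbb{R}^n$ with $s^T y > 0$. The function $\gamma \mapsto \alpha^{BB}(\gamma) = \frac{\|s\|^2 - \|y\|^2/\gamma^2 + \sqrt{(\|s\|^2 - \|y\|^2/\gamma^2)^2 + 4(s^Ty)^2/\gamma^2}}{2 s^T y}$ is monotonically nondecreasing on $(0, \infty)$. -/
import Mathlib

/-- Key inequality: `2c² - b·u ≤ b·√(u² + 4c²p)` with `u = a - bp`, from `c² ≤ ab`. -/
lemma key_ineq (a b c p : ℝ) (hc : 0 < c) (hb : 0 < b) (hab : c ^ 2 ≤ a * b)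
    (hp : 0 < p) :
    2 * c ^ 2 - b * (a - b * p) ≤ b * Real.sqrt ((a - b * p) ^ 2 + 4 * c ^ 2 * p) := by
  have hD : (0:ℝ) ≤ (a - b * p) ^ 2 + 4 * c ^ 2 * p := by positivity
  have hs := Real.sq_sqrt hD
  have hn := Real.sqrt_nonneg ((a - b * p) ^ 2 + 4 * c ^ 2 * p)
  rcases le_or_gt (2 * c ^ 2 - b * (a - b * p)) 0 with h | h
  · exact h.trans (by positivity)
  · set x := Real.sqrt ((a - b * p) ^ 2 + 4 * c ^ 2 * p) with hx
    have hs2 : (b * x) ^ 2 = b ^ 2 * ((a - b * p) ^ 2 + 4 * c ^ 2 * p) := by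
      rw [mul_pow, hs]
    have hsq : (2 * c ^ 2 - b * (a - b * p)) ^ 2 ≤ (b * x) ^ 2 := by
      rw [hs2]; nlinarith [mul_nonneg (sq_nonneg c) (sub_nonneg.2 hab)]
    have hbx : 0 ≤ b * x := mul_nonneg hb.le hn
    nlinarith [hsq, hbx, h, sq_nonneg (2 * c ^ 2 - b * (a - b * p) - b * x),
      sq_nonneg (2 * c ^ 2 - b * (a - b * p) + b * x)]

/-- Monotone (nonincreasing in `t`) form of the BB stepsize function. -/
lemma aux_mono (a b c p q : ℝ) (hc : 0 < c) (hb : 0 < b) (hab : c ^ 2 ≤ a * b)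
    (hp : 0 < p) (hpq : p ≤ q) :
    (a - b * q + Real.sqrt ((a - b * q) ^ 2 + 4 * c ^ 2 * q)) / (2 * c) ≤
    (a - b * p + Real.sqrt ((a - b * p) ^ 2 + 4 * c ^ 2 * p)) / (2 * c) := by
  have hq : 0 < q := hp.trans_le hpq
  have hDp : (0:ℝ) ≤ (a - b * p) ^ 2 + 4 * c ^ 2 * p := by positivity
  have hDq : (0:ℝ) ≤ (a - b * q) ^ 2 + 4 * c ^ 2 * q := by positivity
  have hsp := Real.sq_sqrt hDp
  have hnp := Real.sqrt_nonneg ((a - b * p) ^ 2 + 4 * c ^ 2 * p)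
  have hkey := key_ineq a b c p hc hb hab hp
  have hΔ : 0 ≤ q - p := sub_nonneg.2 hpq
  have h2 : Real.sqrt ((a - b * q) ^ 2 + 4 * c ^ 2 * q) ≤
      Real.sqrt ((a - b * p) ^ 2 + 4 * c ^ 2 * p) + b * (q - p) := by
    have hrhs : 0 ≤ Real.sqrt ((a - b * p) ^ 2 + 4 * c ^ 2 * p) + b * (q - p) := by
      have : 0 ≤ b * (q - p) := mul_nonneg hb.le hΔ
      linarith
    have hle : (a - b * q) ^ 2 + 4 * c ^ 2 * q ≤
        (Real.sqrt ((a - b * p) ^ 2 + 4 * c ^ 2 * p) + b * (q - p)) ^ 2 := by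
      have hmul := mul_le_mul_of_nonneg_left hkey hΔ
      nlinarith [hsp, hnp, mul_nonneg hb.le hΔ]
    calc Real.sqrt ((a - b * q) ^ 2 + 4 * c ^ 2 * q)
        ≤ Real.sqrt ((Real.sqrt ((a - b * p) ^ 2 + 4 * c ^ 2 * p) + b * (q - p)) ^ 2) :=
          Real.sqrt_le_sqrt hle
      _ = Real.sqrt ((a - b * p) ^ 2 + 4 * c ^ 2 * p) + b * (q - p) := Real.sqrt_sq hrhs
  have hnum : a - b * q + Real.sqrt ((a - b * q) ^ 2 + 4 * c ^ 2 * q) ≤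
      a - b * p + Real.sqrt ((a - b * p) ^ 2 + 4 * c ^ 2 * p) := by linarith
  have h2c : (0:ℝ) < 2 * c := by linarith
  exact div_le_div_of_nonneg_right hnum h2c.le

theorem stmt_2 (n : ℕ) (s y : Fin n → ℝ) (hsy : 0 < ∑ i, s i * y i) :
    let c : ℝ := ∑ i, s i * y i
    MonotoneOn (fun γ : ℝ => ((∑ i, s i ^ 2) - (∑ i, y i ^ 2) / γ ^ 2 +
      Real.sqrt (((∑ i, s i ^ 2) - (∑ i, y i ^ 2) / γ ^ 2) ^ 2 + 4 * c ^ 2 / γ ^ 2)) / (2 * c))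
      (Set.Ioi 0) := by
  intro c
  set a : ℝ := ∑ i, s i ^ 2 with ha
  set b : ℝ := ∑ i, y i ^ 2 with hb
  have hab : c ^ 2 ≤ a * b := Finset.sum_mul_sq_le_sq_mul_sq Finset.univ s y
  have hbnn : 0 ≤ b := Finset.sum_nonneg fun i _ => sq_nonneg _
  have hann : 0 ≤ a := Finset.sum_nonneg fun i _ => sq_nonneg _
  have hbpos : 0 < b := by
    rcases hbnn.lt_or_eq with h | h
    · exact h
    · exfalso; nlinarith
  intro γ₁ h1 γ₂ h2 h12
  simp only [Set.mem_Ioi] at h1 h2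
  have hγ1 : (0:ℝ) < γ₁ ^ 2 := by positivity
  have hγ2 : (0:ℝ) < γ₂ ^ 2 := by positivity
  have hpq : (γ₂ ^ 2)⁻¹ ≤ (γ₁ ^ 2)⁻¹ := by
    apply inv_anti₀ hγ1
    exact pow_le_pow_left₀ h1.le h12 2
  have hp : (0:ℝ) < (γ₂ ^ 2)⁻¹ := by positivity
  have := aux_mono a b c ((γ₂ ^ 2)⁻¹) ((γ₁ ^ 2)⁻¹) hsy hbpos hab hp hpq
  simpa only [div_eq_mul_inv] using this
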